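/- Let 𝒞 be a Z2Z4-additive code and C = Φ(𝒞) the corresponding Z2Z4-linear code. For any x, y ∈ 𝒞, one has Φ(x) + Φ(y) ∈ K(C) if and only if Φ(x+y) ∈ K(C). -/
import Mathlib


/-- The ambient group `Z2^α × Z4^β`, with componentwise ring structure
(so `u * v` is the componentwise product). -/
abbrev Amb (α β : ℕ) := (Fin α → ZMod 2) × (Fin β → ZMod 4)

/-- The binary space `Z2^α × (Z2²)^β ≅ Z2^(α+2β)`. -/
abbrev Bin (α β : ℕ) := (Fin α → ZMod 2) × (Fin β → ZMod 2 × ZMod 2)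

/-- The Gray map `φ : Z4 → Z2²` with `φ(0)=(0,0), φ(1)=(0,1), φ(2)=(1,1), φ(3)=(1,0)`. -/
def grayPair (y : ZMod 4) : ZMod 2 × ZMod 2 :=
  match y.val with
  | 0 => (0, 0)
  | 1 => (0, 1)
  | 2 => (1, 1)
  | _ => (1, 0)

/-- The extended Gray map `Φ : Z2^α × Z4^β → Z2^(α+2β)`. -/
def Phi {α β : ℕ} (u : Amb α β) : Bin α β :=
  (u.1, fun i => grayPair (u.2 i))

/-- The kernel `K(C) = {x | x + C = C}` of a binary code. -/
def kernelK {α β : ℕ} (C : Set (Bin α β)) : Set (Bin α β) :=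
  {x | (fun y => x + y) '' C = C}

/-- The rank of a binary code: the `Z2`-dimension of its linear span. -/
noncomputable def rankOf {α β : ℕ} (C : Set (Bin α β)) : ℕ :=
  Module.finrank (ZMod 2) (Submodule.span (ZMod 2) C)

/-- The dimension of the kernel of a binary code. -/
noncomputable def kerDim {α β : ℕ} (C : Set (Bin α β)) : ℕ :=
  Module.finrank (ZMod 2) (Submodule.span (ZMod 2) (kernelK C))

/-- A `Z2Z4`-additive code `C ⊆ Z2^α × Z4^β` is of type `(α,β;γ,δ;κ)`:
`|C| = 2^(γ+2δ)`, the number of elements `x` with `2x = 0` is `2^(γ+δ)`, and `κ` is the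
`Z2`-dimension of the projection onto the first `α` coordinates of `{x ∈ C | 2x = 0}`. -/
def IsTypeOf (α β γ δ κ : ℕ) (C : AddSubgroup (Amb α β)) : Prop :=
  Nat.card C = 2 ^ (γ + 2 * δ) ∧
  Nat.card {x : Amb α β | x ∈ C ∧ 2 • x = 0} = 2 ^ (γ + δ) ∧
  Module.finrank (ZMod 2)
    (Submodule.span (ZMod 2) (Prod.fst '' {x : Amb α β | x ∈ C ∧ 2 • x = 0})) = κ

lemma gray_add : ∀ a b : ZMod 4, grayPair a + grayPair b = grayPair (a + b + 2*(a*b)) := by decide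

lemma gray_inj : Function.Injective grayPair := by decide

lemma Phi_add {α β : ℕ} (u v : Amb α β) : Phi u + Phi v = Phi (u + v + 2*(u*v)) := by
  have h2 : ∀ a b : ZMod 2, a + b + 2*(a*b) = a + b := by decide
  refine Prod.ext ?_ ?_
  · funext i
    show u.1 i + v.1 i = u.1 i + v.1 i + 2*(u.1 i * v.1 i)
    rw [h2]
  · funext i
    show grayPair (u.2 i) + grayPair (v.2 i) = grayPair (u.2 i + v.2 i + 2*(u.2 i * v.2 i))
    rw [gray_add]

lemma Phi_inj {α β : ℕ} : Function.Injective (Phi (α := α) (β := β)) := by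
  intro u v h
  have h1 : u.1 = v.1 := congrArg (fun z : Bin α β => z.1) h
  have h2 : ∀ i, grayPair (u.2 i) = grayPair (v.2 i) :=
    fun i => congrFun (congrArg (fun z : Bin α β => z.2) h) i
  exact Prod.ext h1 (funext fun i => gray_inj (h2 i))

lemma bin_add_self {α β : ℕ} (w : Bin α β) : w + w = 0 := by
  have h2 : ∀ a : ZMod 2, a + a = 0 := by decide
  have h22 : ∀ a : ZMod 2 × ZMod 2, a + a = 0 := by decide
  refine Prod.ext ?_ ?_ <;> funext i <;> simp [h2, h22]

lemma mem_kernelK_iff {α β : ℕ} (v : Bin α β) (S : Set (Bin α β)) :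
    v ∈ kernelK S ↔ ∀ c ∈ S, v + c ∈ S := by
  constructor
  · intro h c hc
    have : v + c ∈ (fun y => v + y) '' S := Set.mem_image_of_mem _ hc
    rwa [h] at this
  · intro h
    refine Set.Subset.antisymm ?_ ?_
    · rintro z ⟨c, hc, rfl⟩; exact h c hc
    · intro z hz
      refine ⟨v + z, h z hz, ?_⟩
      show v + (v + z) = z
      rw [← add_assoc, bin_add_self, zero_add]

lemma amb_four {α β : ℕ} (z : Amb α β) : z + z + z + z = 0 := by
  have h4 : ∀ a : ZMod 4, a+a+a+a = 0 := by decide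
  have h2 : ∀ a : ZMod 2, a+a+a+a = 0 := by decide
  exact Prod.ext (funext fun i => h2 (z.1 i)) (funext fun i => h4 (z.2 i))

lemma amb_sq {α β : ℕ} (z : Amb α β) : z*z + z*z + z + z = 0 := by
  have h4 : ∀ a : ZMod 4, a*a+a*a+a+a = 0 := by decide
  have h2 : ∀ a : ZMod 2, a*a+a*a+a+a = 0 := by decide
  exact Prod.ext (funext fun i => h2 (z.1 i)) (funext fun i => h4 (z.2 i))

lemma key_id {α β : ℕ} (x y c : Amb α β) :
    (x + y + 2*(x*y)) + c + 2*((x + y + 2*(x*y))*c)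
      = ((x + y) + c + 2*((x + y)*c)) + 2*(x*y) := by
  linear_combination amb_four (x*y*c)

lemma at_y {α β : ℕ} (x y : Amb α β) :
    (x + y) + y + 2*((x + y)*y) = x + 2*(x*y) := by
  linear_combination amb_sq y

/-- for `x, y ∈ 𝒞`, `Φ(x) + Φ(y) ∈ K(C)` iff `Φ(x+y) ∈ K(C)`. -/
theorem add_mem_kernel_iff (α β : ℕ) (C : AddSubgroup (Amb α β)) (x y : Amb α β)
    (hx : x ∈ C) (hy : y ∈ C) :
    Phi x + Phi y ∈ kernelK (Phi '' (C : Set (Amb α β))) ↔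
      Phi (x + y) ∈ kernelK (Phi '' (C : Set (Amb α β))) := by
  rw [mem_kernelK_iff, mem_kernelK_iff]
  have key : ∀ z : Amb α β,
      ((∀ s ∈ Phi '' (C : Set (Amb α β)), Phi z + s ∈ Phi '' (C : Set (Amb α β))) ↔
        ∀ c ∈ C, z + c + 2*(z*c) ∈ C) := by
    intro z
    constructor
    · intro h c hc
      have h1 := h (Phi c) ⟨c, hc, rfl⟩
      rw [Phi_add] at h1
      exact (Phi_inj.mem_set_image).mp h1
    · rintro h s ⟨c, hc, rfl⟩
      rw [Phi_add]
      exact ⟨_, h c hc, rfl⟩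
  rw [Phi_add x y, key (x + y + 2*(x*y)), key (x + y)]
  constructor
  · intro hA
    have h0 : x + y + 2*(x*y) ∈ C := by
      have := hA 0 C.zero_mem
      simpa using this
    have hxy : 2*(x*y) ∈ C := by
      have := C.sub_mem h0 (C.add_mem hx hy)
      simpa [add_sub_cancel_left] using this
    intro c hc
    have := C.sub_mem (hA c hc) hxy
    rwa [key_id, add_sub_cancel_right] at this
  · intro hB
    have hxy : 2*(x*y) ∈ C := by
      have h1 := hB y hy
      rw [at_y] at h1
      have := C.sub_mem h1 hx
      simpa [add_sub_cancel_left] using this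
    intro c hc
    rw [key_id]
    exact C.add_mem (hB c hc) hxy
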